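/- Given real numbers ρ₀ ≥ 0, ..., ρ_{K−1} ≥ 0, the linear program maximizing Σ_{i=1}^{K} ρ_{i−1} s_{i−1} subject to Σ_{i=1}^{t} s_{i−1} ≤ t for all t = 1,…,K and s_{i−1} ≥ 0, has optimal value at most Σ_{t=1}^{K} max_{j ≥ t} ρ_{j−1}. -/
import Mathlib


/-- The LP maximizing `Σ ρ_{i-1} s_{i-1}` under the partial-sum constraints
`Σ_{i=1}^t s_{i-1} ≤ t` has optimal value at most the sum of suffix maxima of `ρ`. -/
theorem lp_value_le_suffix_maxima (K : ℕ) (hK : 0 < K) (ρ s : ℕ → ℝ)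
    (hρ : ∀ i < K, 0 ≤ ρ i) (hs : ∀ i < K, 0 ≤ s i)
    (hsum : ∀ t, 1 ≤ t → t ≤ K → ∑ i ∈ Finset.range t, s i ≤ (t : ℝ)) :
    ∑ i ∈ Finset.range K, ρ i * s i ≤
      ∑ t ∈ (Finset.range K).attach,
        (Finset.Ico t.1 K).sup' (by
          exact Finset.nonempty_Ico.mpr (Finset.mem_range.mp t.2)) ρ := by
  classical
  set M : ℕ → ℝ := fun t =>
    if h : t < K then (Finset.Ico t K).sup' (Finset.nonempty_Ico.mpr h) ρ else 0 with hM
  have hMdef : ∀ t (h : t < K),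
      M t = (Finset.Ico t K).sup' (Finset.nonempty_Ico.mpr h) ρ := fun t h => dif_pos h
  have hMK : ∀ t, K ≤ t → M t = 0 := fun t h => dif_neg (not_lt.mpr h)
  have hρM : ∀ i, i < K → ρ i ≤ M i := by
    intro i hi
    rw [hMdef i hi]
    exact Finset.le_sup' ρ (Finset.mem_Ico.mpr ⟨le_refl i, hi⟩)
  have hMnonneg : ∀ t, 0 ≤ M t := by
    intro t
    by_cases h : t < K
    · exact le_trans (hρ t h) (hρM t h)
    · rw [hMK t (not_lt.mp h)]
  have hMmono : ∀ t, M (t + 1) ≤ M t := by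
    intro t
    by_cases h : t + 1 < K
    · rw [hMdef _ h, hMdef _ (Nat.lt_of_succ_lt h)]
      apply Finset.sup'_le
      intro b hb
      exact Finset.le_sup' ρ (Finset.mem_Ico.mpr
        ⟨le_trans (Nat.le_succ t) (Finset.mem_Ico.mp hb).1, (Finset.mem_Ico.mp hb).2⟩)
    · rw [hMK _ (not_lt.mp h)]; exact hMnonneg t
  set S : ℕ → ℝ := fun n => ∑ i ∈ Finset.range n, s i with hS
  have abel : ∀ n, ∑ i ∈ Finset.range n, M i * s i
      = (∑ t ∈ Finset.range n, (M t - M (t + 1)) * S (t + 1)) + M n * S n := by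
    intro n
    induction n with
    | zero => simp [S]
    | succ n ih =>
      rw [Finset.sum_range_succ, ih, Finset.sum_range_succ]
      have hstep : S (n + 1) = S n + s n := Finset.sum_range_succ s n
      rw [hstep]; ring
  have tele : ∀ n, ∑ t ∈ Finset.range n, (M t - M (t + 1)) * ((t : ℝ) + 1)
      = (∑ t ∈ Finset.range n, M t) - M n * n := by
    intro n
    induction n with
    | zero => simp
    | succ n ih =>
      rw [Finset.sum_range_succ, ih, Finset.sum_range_succ]
      push_cast; ring
  have hstep : ∑ i ∈ Finset.range K, ρ i * s i ≤ ∑ t ∈ Finset.range K, M t := by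
    calc ∑ i ∈ Finset.range K, ρ i * s i ≤ ∑ i ∈ Finset.range K, M i * s i := by
          apply Finset.sum_le_sum
          intro i hi
          exact mul_le_mul_of_nonneg_right (hρM i (Finset.mem_range.mp hi))
            (hs i (Finset.mem_range.mp hi))
      _ = (∑ t ∈ Finset.range K, (M t - M (t + 1)) * S (t + 1)) + M K * S K := abel K
      _ = ∑ t ∈ Finset.range K, (M t - M (t + 1)) * S (t + 1) := by rw [hMK K le_rfl]; ring
      _ ≤ ∑ t ∈ Finset.range K, (M t - M (t + 1)) * ((t : ℝ) + 1) := by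
          apply Finset.sum_le_sum
          intro t ht
          have h1 : S (t + 1) ≤ (t : ℝ) + 1 := by
            have h2 := hsum (t + 1) (Nat.succ_le_succ (Nat.zero_le t)) (Finset.mem_range.mp ht)
            push_cast at h2
            exact h2
          exact mul_le_mul_of_nonneg_left h1 (sub_nonneg.mpr (hMmono t))
      _ = (∑ t ∈ Finset.range K, M t) - M K * K := tele K
      _ = ∑ t ∈ Finset.range K, M t := by rw [hMK K le_rfl]; ring
  refine le_trans hstep (le_of_eq ?_)
  rw [← Finset.sum_attach (Finset.range K) M]
  exact Finset.sum_congr rfl fun x _ => hMdef x.1 (Finset.mem_range.mp x.2)
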